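/- (Poisson summation formula for the Hartley transform.) Let f : ℝ → ℝ be a Schwartz function and let a, b > 0. Then for every x ∈ ℝ, a·b·∑_{r∈ℤ} f(b(ar + x)) = √(2π) ∑_{m∈ℤ} (𝓗f)(2πm/(ab)) · cas(2πmx/a), both series converging absolutely. -/

import Mathlib

/-- The cas function, `cas x = cos x - sin x`. -/
noncomputable def cas (x : ℝ) : ℝ := Real.cos x - Real.sin x

/-- The Hartley transform `(𝓗 f)(λ) = (1/√(2π)) ∫ f(x) cas(λ x) dx`. -/
noncomputable def hartley (f : ℝ → ℝ) (l : ℝ) : ℝ :=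
    (1 / Real.sqrt (2 * Real.pi)) * ∫ x : ℝ, f x * cas (l * x)

open MeasureTheory Filter Asymptotics FourierTransform

namespace HartleyAux

/-- Complexification of a real Schwartz function. -/
noncomputable def toComplex (f : SchwartzMap ℝ ℝ) : SchwartzMap ℝ ℂ where
  toFun x := (f x : ℂ)
  smooth' := Complex.ofRealCLM.contDiff.comp f.smooth'
  decay' := by
    intro k n
    obtain ⟨C, hC⟩ := f.decay' k n
    refine ⟨C, fun x => ?_⟩
    have h := LinearIsometry.norm_iteratedFDeriv_comp_left (𝕜 := ℝ)
      (RCLike.ofRealLI (K := ℂ)) ((f.smooth ⊤).contDiffAt (x := x)) (i := n) (by exact_mod_cast le_top)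
    have he : ((RCLike.ofRealLI : ℝ →ₗᵢ[ℝ] ℂ) ∘ ⇑f) = fun y => ((f y : ℝ) : ℂ) := by
      funext y; simp [RCLike.ofRealLI_apply]
    rw [he] at h
    rw [h]
    exact hC x

@[simp] lemma toComplex_apply (f : SchwartzMap ℝ ℝ) (x : ℝ) : toComplex f x = (f x : ℂ) := rfl

lemma aux_mul_isBigO {k : ℝ} (hk : k ≠ 0) (l : Filter ℝ) :
    (fun t : ℝ => |k * t| ^ (-2 : ℝ)) =O[l] (fun t => |t| ^ (-2 : ℝ)) := by
  have he : (fun t : ℝ => |k * t| ^ (-2 : ℝ)) = fun t => |k| ^ (-2 : ℝ) * |t| ^ (-2 : ℝ) := by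
    funext t; rw [abs_mul, Real.mul_rpow (abs_nonneg _) (abs_nonneg _)]
  rw [he]
  exact isBigO_const_mul_self _ _ _

lemma rpow_neg_two_eq (u : ℝ) (hu : 0 < u) : u ^ (-2 : ℝ) = (u ^ 2)⁻¹ := by
  rw [show (-2 : ℝ) = ((-2 : ℤ) : ℝ) by norm_num, Real.rpow_intCast]
  rw [zpow_neg]
  norm_cast

lemma aux_shift_isBigO (q : ℝ) :
    (fun t : ℝ => |t + q| ^ (-2 : ℝ)) =O[cocompact ℝ] (fun t => |t| ^ (-2 : ℝ)) := by
  rw [isBigO_iff]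
  refine ⟨4, ?_⟩
  have hev : ∀ᶠ t : ℝ in cocompact ℝ, 2 * |q| + 2 ≤ |t| := by
    rw [cocompact_eq_atBot_atTop, eventually_sup]
    constructor
    · filter_upwards [eventually_le_atBot (-(2 * |q| + 2))] with t ht
      calc 2 * |q| + 2 ≤ -t := by linarith
      _ ≤ |t| := neg_le_abs t
    · filter_upwards [eventually_ge_atTop (2 * |q| + 2)] with t ht
      exact ht.trans (le_abs_self t)
  filter_upwards [hev] with t ht
  have hq : 0 ≤ |q| := abs_nonneg q
  have h0 : (0 : ℝ) < |t| := by linarith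
  have h1 : |t| / 2 ≤ |t + q| := by
    have : |t| ≤ |t + q| + |q| := by
      calc |t| = |t + q - q| := by ring_nf
      _ ≤ |t + q| + |q| := abs_sub _ _
    linarith
  have h2 : (0 : ℝ) < |t + q| := by linarith
  rw [Real.norm_eq_abs, Real.norm_eq_abs, abs_of_nonneg (Real.rpow_nonneg (abs_nonneg _) _),
    abs_of_nonneg (Real.rpow_nonneg (abs_nonneg _) _), rpow_neg_two_eq _ h2, rpow_neg_two_eq _ h0]
  rw [inv_le_iff_one_le_mul₀ (by positivity)]
  have h3 : |t| ^ 2 ≤ 4 * (|t + q| ^ 2) := by nlinarith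
  calc (1 : ℝ) = (|t| ^ 2)⁻¹ * |t| ^ 2 := by rw [inv_mul_cancel₀ (by positivity)]
  _ ≤ (|t| ^ 2)⁻¹ * (4 * |t + q| ^ 2) := by gcongr
  _ = 4 * (|t| ^ 2)⁻¹ * |t + q| ^ 2 := by ring

lemma integrable_mul_cos (f : SchwartzMap ℝ ℝ) (l : ℝ) :
    Integrable (fun v : ℝ => f v * Real.cos (l * v)) := by
  have := (f.integrable (μ := volume)).bdd_mul
    (Real.continuous_cos.comp (continuous_const.mul continuous_id)).aestronglyMeasurable
    (ae_of_all _ fun v => by simpa using Real.abs_cos_le_one (l * v))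
  simpa [mul_comm] using this

lemma integrable_mul_sin (f : SchwartzMap ℝ ℝ) (l : ℝ) :
    Integrable (fun v : ℝ => f v * Real.sin (l * v)) := by
  have := (f.integrable (μ := volume)).bdd_mul
    (Real.continuous_sin.comp (continuous_const.mul continuous_id)).aestronglyMeasurable
    (ae_of_all _ fun v => by simpa using Real.abs_sin_le_one (l * v))
  simpa [mul_comm] using this

lemma fourierIntegral_ofReal (f : SchwartzMap ℝ ℝ) (ξ : ℝ) :
    𝓕 (fun v : ℝ => (f v : ℂ)) ξ =
      ((∫ v : ℝ, f v * Real.cos (2 * Real.pi * ξ * v) : ℝ) : ℂ) -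
        ((∫ v : ℝ, f v * Real.sin (2 * Real.pi * ξ * v) : ℝ) : ℂ) * Complex.I := by
  rw [Real.fourier_real_eq_integral_exp_smul]
  have he : ∀ v : ℝ, Complex.exp (↑(-2 * Real.pi * v * ξ) * Complex.I) • ((f v : ℝ) : ℂ) =
      ((f v * Real.cos (2 * Real.pi * ξ * v) : ℝ) : ℂ) -
        ((f v * Real.sin (2 * Real.pi * ξ * v) : ℝ) : ℂ) * Complex.I := by
    intro v
    rw [Complex.exp_mul_I, smul_eq_mul]
    push_cast
    rw [show ((-2 : ℂ) * ↑Real.pi * ↑v * ↑ξ) = -(2 * ↑Real.pi * ↑ξ * ↑v) by ring,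
      Complex.cos_neg, Complex.sin_neg]
    ring
  simp_rw [he]
  have h1 : Integrable (fun v : ℝ => ((f v * Real.cos (2 * Real.pi * ξ * v) : ℝ) : ℂ)) :=
    (integrable_mul_cos f _).ofReal
  have h2 : Integrable (fun v : ℝ =>
      ((f v * Real.sin (2 * Real.pi * ξ * v) : ℝ) : ℂ) * Complex.I) :=
    ((integrable_mul_sin f _).ofReal).mul_const Complex.I
  rw [integral_sub h1 h2, integral_mul_const]
  congr 1
  · exact integral_ofReal
  · congr 1
    exact integral_ofReal

lemma hartley_eq (f : SchwartzMap ℝ ℝ) (l : ℝ) :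
    hartley (fun y => f y) l =
      ((∫ v : ℝ, f v * Real.cos (l * v)) - ∫ v : ℝ, f v * Real.sin (l * v)) /
        Real.sqrt (2 * Real.pi) := by
  have hs : (0 : ℝ) < Real.sqrt (2 * Real.pi) := Real.sqrt_pos.mpr (by positivity)
  rw [hartley]
  have he : ∀ v : ℝ, f v * cas (l * v) = f v * Real.cos (l * v) - f v * Real.sin (l * v) := by
    intro v; simp [cas]; ring
  simp_rw [he]
  rw [integral_sub (integrable_mul_cos f l) (integrable_mul_sin f l)]
  field_simp

lemma re_aux (u v θ : ℝ) :
    ((↑u - ↑v * Complex.I) * Complex.exp (↑θ * Complex.I)).re =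
      u * Real.cos θ + v * Real.sin θ := by
  rw [Complex.exp_mul_I]
  simp [Complex.mul_re, Complex.sub_re, Complex.sub_im, Complex.mul_im,
    Complex.cos_ofReal_re, Complex.sin_ofReal_re, Complex.cos_ofReal_im, Complex.sin_ofReal_im]

end HartleyAux

open HartleyAux in
/-- Poisson summation formula for the Hartley transform: for a Schwartz function `f`
and `a, b > 0`,
`a b ∑_{r ∈ ℤ} f(b(ar + x)) = √(2π) ∑_{m ∈ ℤ} (𝓗 f)(2πm/(ab)) cas(2πmx/a)`,
both series converging absolutely. -/
theorem hartley_poisson_summation (f : SchwartzMap ℝ ℝ) (a b : ℝ)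
    (ha : 0 < a) (hb : 0 < b) (x : ℝ) :
    Summable (fun r : ℤ => |f (b * (a * r + x))|) ∧
    Summable (fun m : ℤ =>
      |hartley (fun y => f y) (2 * Real.pi * m / (a * b)) * cas (2 * Real.pi * m * x / a)|) ∧
    a * b * ∑' r : ℤ, f (b * (a * r + x)) =
      Real.sqrt (2 * Real.pi) *
        ∑' m : ℤ, hartley (fun y => f y) (2 * Real.pi * m / (a * b)) *
          cas (2 * Real.pi * m * x / a) := by
  have hc : (0 : ℝ) < a * b := mul_pos ha hb
  set c : ℝ := a * b with hcdef
  have hπ : (0 : ℝ) < Real.pi := Real.pi_pos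
  have hs2 : (0 : ℝ) < Real.sqrt (2 * Real.pi) := Real.sqrt_pos.mpr (by positivity)
  set F : SchwartzMap ℝ ℂ := toComplex f with hFdef
  set g : ℝ → ℂ := fun t => F (c * t) with hgdef
  have habs : (fun t : ℝ => ‖t‖ ^ (-2 : ℝ)) = fun t : ℝ => |t| ^ (-2 : ℝ) := by
    funext t; rw [Real.norm_eq_abs]
  have t1 : Filter.Tendsto (fun t : ℝ => c * t) (cocompact ℝ) (cocompact ℝ) :=
    (Homeomorph.mulLeft₀ c hc.ne').map_cocompact.le
  have t2 : Filter.Tendsto (fun t : ℝ => t / c) (cocompact ℝ) (cocompact ℝ) := by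
    have h := (Homeomorph.mulRight₀ c⁻¹ (inv_ne_zero hc.ne')).map_cocompact.le
    simpa [div_eq_mul_inv, Filter.Tendsto] using h
  have hF2 : (fun t : ℝ => F t) =O[cocompact ℝ] fun t : ℝ => |t| ^ (-2 : ℝ) := by
    rw [← habs]; exact F.isBigO_cocompact_rpow (-2)
  have hg_decay : g =O[cocompact ℝ] fun t : ℝ => |t| ^ (-2 : ℝ) :=
    (hF2.comp_tendsto t1).trans (aux_mul_isBigO hc.ne' _)
  -- scaling of the Fourier integral
  have h_scale : ∀ ξ : ℝ, 𝓕 g ξ = (c : ℂ)⁻¹ * 𝓕 (fun v : ℝ => (f v : ℂ)) (ξ / c) := by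
    intro ξ
    rw [Real.fourier_real_eq, Real.fourier_real_eq]
    have he : ∀ t : ℝ, (𝐞 (-(t * ξ)) : Circle) • g t =
        (fun v : ℝ => (𝐞 (-(v * (ξ / c))) : Circle) • ((f v : ℝ) : ℂ)) (c * t) := by
      intro t
      simp only [hgdef, hFdef, toComplex_apply]
      congr 2
      field_simp
    calc (∫ t : ℝ, (𝐞 (-(t * ξ)) : Circle) • g t)
        = ∫ t : ℝ, (fun v : ℝ => (𝐞 (-(v * (ξ / c))) : Circle) • ((f v : ℝ) : ℂ)) (c * t) := by
          simp_rw [he]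
      _ = |c⁻¹| • ∫ v : ℝ, (𝐞 (-(v * (ξ / c))) : Circle) • ((f v : ℝ) : ℂ) := by
          exact MeasureTheory.Measure.integral_comp_mul_left
            (fun v : ℝ => (𝐞 (-(v * (ξ / c))) : Circle) • ((f v : ℝ) : ℂ)) c
      _ = (c : ℂ)⁻¹ * ∫ v : ℝ, (𝐞 (-(v * (ξ / c))) : Circle) • ((f v : ℝ) : ℂ) := by
          rw [abs_of_pos (inv_pos.mpr hc), Complex.real_smul, Complex.ofReal_inv]
  have hFg_eq : 𝓕 g = fun ξ => (c : ℂ)⁻¹ * 𝓕 (fun v : ℝ => (f v : ℂ)) (ξ / c) :=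
    funext h_scale
  have hFF : (𝓕 (fun t : ℝ => F t)) =O[cocompact ℝ] fun t : ℝ => |t| ^ (-2 : ℝ) := by
    rw [← habs]
    exact (SchwartzMap.fourierTransformCLM ℝ F).isBigO_cocompact_rpow (-2)
  have hFg_decay : (𝓕 g) =O[cocompact ℝ] fun t : ℝ => |t| ^ (-2 : ℝ) := by
    rw [hFg_eq]
    have h3 : (fun t : ℝ => |c⁻¹ * t| ^ (-2 : ℝ)) =O[cocompact ℝ] fun t => |t| ^ (-2 : ℝ) :=
      aux_mul_isBigO (inv_ne_zero hc.ne') _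
    have h4 : (fun t : ℝ => |t / c| ^ (-2 : ℝ)) = fun t : ℝ => |c⁻¹ * t| ^ (-2 : ℝ) := by
      funext t; rw [div_eq_mul_inv, mul_comm]
    have h5 : (fun ξ : ℝ => (c : ℂ)⁻¹ * 𝓕 (fun v : ℝ => (f v : ℂ)) (ξ / c))
        =O[cocompact ℝ] fun ξ : ℝ => |ξ / c| ^ (-2 : ℝ) := by
      have h6 := (hFF.comp_tendsto t2).const_mul_left ((c : ℂ)⁻¹)
      simpa [hFdef, Function.comp_def] using h6
    exact h5.trans (h4 ▸ h3)
  have hgc : Continuous g := F.continuous.comp (continuous_const.mul continuous_id)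
  have hpoisson := Real.tsum_eq_tsum_fourier_of_rpow_decay hgc one_lt_two
    hg_decay hFg_decay (x / a)
  have hFg_sum : Summable fun n : ℤ => ‖𝓕 g (n : ℝ)‖ := by
    apply summable_of_isBigO (Real.summable_abs_int_rpow one_lt_two)
    exact (hFg_decay.norm_left).comp_tendsto Int.tendsto_coe_cofinite
  -- key computation of 𝓕 g at integers
  have key1 : ∀ n : ℤ, 𝓕 g ((n : ℤ) : ℝ) =
      (c : ℂ)⁻¹ * (((∫ v : ℝ, f v * Real.cos (2 * Real.pi * (n : ℝ) / c * v) : ℝ) : ℂ) -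
        ((∫ v : ℝ, f v * Real.sin (2 * Real.pi * (n : ℝ) / c * v) : ℝ) : ℂ) * Complex.I) := by
    intro n
    rw [h_scale, fourierIntegral_ofReal]
    rw [show 2 * Real.pi * ((n : ℝ) / c) = 2 * Real.pi * (n : ℝ) / c by ring]
  have hc0 : (c : ℂ) ≠ 0 := by exact_mod_cast hc.ne'
  have key1' : ∀ n : ℤ, (c : ℂ) * 𝓕 g ((n : ℤ) : ℝ) =
      ((∫ v : ℝ, f v * Real.cos (2 * Real.pi * (n : ℝ) / c * v) : ℝ) : ℂ) -
        ((∫ v : ℝ, f v * Real.sin (2 * Real.pi * (n : ℝ) / c * v) : ℝ) : ℂ) * Complex.I := by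
    intro n; rw [key1 n, mul_inv_cancel_left₀ hc0]
  have hCb : ∀ n : ℤ, |∫ v : ℝ, f v * Real.cos (2 * Real.pi * (n : ℝ) / c * v)| ≤
      c * ‖𝓕 g ((n : ℤ) : ℝ)‖ := by
    intro n
    have h1 : ((c : ℂ) * 𝓕 g ((n : ℤ) : ℝ)).re =
        ∫ v : ℝ, f v * Real.cos (2 * Real.pi * (n : ℝ) / c * v) := by
      rw [key1' n]; simp
    rw [← h1]
    calc |((c : ℂ) * 𝓕 g ((n : ℤ) : ℝ)).re| ≤ ‖(c : ℂ) * 𝓕 g ((n : ℤ) : ℝ)‖ :=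
      Complex.abs_re_le_norm _
    _ = c * ‖𝓕 g ((n : ℤ) : ℝ)‖ := by
      rw [norm_mul, Complex.norm_real, Real.norm_eq_abs, abs_of_pos hc]
  have hSb : ∀ n : ℤ, |∫ v : ℝ, f v * Real.sin (2 * Real.pi * (n : ℝ) / c * v)| ≤
      c * ‖𝓕 g ((n : ℤ) : ℝ)‖ := by
    intro n
    have h1 : ((c : ℂ) * 𝓕 g ((n : ℤ) : ℝ)).im =
        -∫ v : ℝ, f v * Real.sin (2 * Real.pi * (n : ℝ) / c * v) := by
      rw [key1' n]; simp
    have h2 : |∫ v : ℝ, f v * Real.sin (2 * Real.pi * (n : ℝ) / c * v)| =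
        |((c : ℂ) * 𝓕 g ((n : ℤ) : ℝ)).im| := by rw [h1, abs_neg]
    rw [h2]
    calc |((c : ℂ) * 𝓕 g ((n : ℤ) : ℝ)).im| ≤ ‖(c : ℂ) * 𝓕 g ((n : ℤ) : ℝ)‖ :=
      Complex.abs_im_le_norm _
    _ = c * ‖𝓕 g ((n : ℤ) : ℝ)‖ := by
      rw [norm_mul, Complex.norm_real, Real.norm_eq_abs, abs_of_pos hc]
  -- summability claim 1
  have hf2 : (fun t : ℝ => f t) =O[cocompact ℝ] fun t => |t| ^ (-2 : ℝ) := by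
    rw [← habs]; exact f.isBigO_cocompact_rpow (-2)
  have t3 : Filter.Tendsto (fun t : ℝ => c * t + b * x) (cocompact ℝ) (cocompact ℝ) :=
    ((Homeomorph.mulLeft₀ c hc.ne').trans (Homeomorph.addRight (b * x))).map_cocompact.le
  have hshift : (fun t : ℝ => |c * t + b * x| ^ (-2 : ℝ)) =O[cocompact ℝ]
      fun t => |t| ^ (-2 : ℝ) := by
    have h5 := (aux_shift_isBigO (b * x)).comp_tendsto t1
    exact h5.trans (aux_mul_isBigO hc.ne' _)
  have h8 : ∀ r : ℤ, c * (r : ℝ) + b * x = b * (a * r + x) := by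
    intro r; rw [hcdef]; ring
  have hsum1 : Summable fun r : ℤ => |f (b * (a * r + x))| := by
    have h6 : (fun t : ℝ => |f (c * t + b * x)|) =O[cocompact ℝ] fun t => |t| ^ (-2 : ℝ) := by
      have := (hf2.comp_tendsto t3).norm_left
      simp only [Real.norm_eq_abs] at this
      exact this.trans hshift
    have h7 := h6.comp_tendsto Int.tendsto_coe_cofinite
    have h9 : (fun r : ℤ => |f (b * (a * r + x))|) = fun r : ℤ => |f (c * (r : ℝ) + b * x)| := by
      funext r; rw [h8]
    rw [h9]
    exact summable_of_isBigO (Real.summable_abs_int_rpow one_lt_two) h7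
  -- summability claim 2
  have casb : ∀ θ : ℝ, |cas θ| ≤ 2 := by
    intro θ
    simp only [cas]
    calc |Real.cos θ - Real.sin θ| ≤ |Real.cos θ| + |Real.sin θ| := abs_sub _ _
    _ ≤ 1 + 1 := add_le_add (Real.abs_cos_le_one θ) (Real.abs_sin_le_one θ)
    _ = 2 := by norm_num
  have hhart : ∀ n : ℤ, hartley (fun y => f y) (2 * Real.pi * (n : ℝ) / c) =
      ((∫ v : ℝ, f v * Real.cos (2 * Real.pi * (n : ℝ) / c * v)) -
        ∫ v : ℝ, f v * Real.sin (2 * Real.pi * (n : ℝ) / c * v)) / Real.sqrt (2 * Real.pi) :=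
    fun n => hartley_eq f _
  have hsum2 : Summable fun m : ℤ =>
      |hartley (fun y => f y) (2 * Real.pi * (m : ℝ) / c) * cas (2 * Real.pi * m * x / a)| := by
    apply Summable.of_nonneg_of_le (fun n => abs_nonneg _) ?_
      (hFg_sum.mul_left (4 * c / Real.sqrt (2 * Real.pi)))
    intro n
    rw [abs_mul, hhart n, abs_div, abs_of_pos hs2]
    have hCS : |(∫ v : ℝ, f v * Real.cos (2 * Real.pi * (n : ℝ) / c * v)) -
        ∫ v : ℝ, f v * Real.sin (2 * Real.pi * (n : ℝ) / c * v)| ≤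
        2 * c * ‖𝓕 g ((n : ℤ) : ℝ)‖ := by
      calc |(∫ v : ℝ, f v * Real.cos (2 * Real.pi * (n : ℝ) / c * v)) -
          ∫ v : ℝ, f v * Real.sin (2 * Real.pi * (n : ℝ) / c * v)| ≤
          |∫ v : ℝ, f v * Real.cos (2 * Real.pi * (n : ℝ) / c * v)| +
          |∫ v : ℝ, f v * Real.sin (2 * Real.pi * (n : ℝ) / c * v)| := abs_sub _ _
      _ ≤ c * ‖𝓕 g ((n : ℤ) : ℝ)‖ + c * ‖𝓕 g ((n : ℤ) : ℝ)‖ := add_le_add (hCb n) (hSb n)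
      _ = 2 * c * ‖𝓕 g ((n : ℤ) : ℝ)‖ := by ring
    have h1 : |(∫ v : ℝ, f v * Real.cos (2 * Real.pi * (n : ℝ) / c * v)) -
        ∫ v : ℝ, f v * Real.sin (2 * Real.pi * (n : ℝ) / c * v)| / Real.sqrt (2 * Real.pi) *
          |cas (2 * Real.pi * n * x / a)| ≤
        2 * c * ‖𝓕 g ((n : ℤ) : ℝ)‖ / Real.sqrt (2 * Real.pi) * 2 :=
      mul_le_mul (by gcongr) (casb _) (abs_nonneg _) (by positivity)
    exact h1.trans (le_of_eq (by ring))
  refine ⟨hsum1, hsum2, ?_⟩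
  -- the identity
  have key2 : ∀ n : ℤ, (fourier n ((x / a : ℝ) : UnitAddCircle) : ℂ) =
      Complex.exp ((2 * Real.pi * (n : ℝ) * x / a : ℝ) * Complex.I) := by
    intro n
    rw [fourier_coe_apply]
    have ha0 : (a : ℂ) ≠ 0 := by exact_mod_cast ha.ne'
    congr 1
    push_cast
    field_simp
  have hT_sum : Summable fun n : ℤ =>
      𝓕 g ((n : ℤ) : ℝ) * (fourier n ((x / a : ℝ) : UnitAddCircle) : ℂ) := by
    apply Summable.of_norm
    apply Summable.of_nonneg_of_le (fun _ => norm_nonneg _) ?_ hFg_sum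
    intro n
    rw [norm_mul, key2 n, Complex.norm_exp_ofReal_mul_I, mul_one]
  have hgf : ∀ r : ℤ, g (x / a + (r : ℝ)) = ((f (b * (a * r + x)) : ℝ) : ℂ) := by
    intro r
    simp only [hgdef, hFdef, toComplex_apply]
    congr 2
    rw [hcdef]
    field_simp
    ring
  have hstep1 : ((∑' r : ℤ, f (b * (a * r + x)) : ℝ) : ℂ) =
      ∑' n : ℤ, 𝓕 g ((n : ℤ) : ℝ) * (fourier n ((x / a : ℝ) : UnitAddCircle) : ℂ) := by
    rw [Complex.ofReal_tsum, ← hpoisson]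
    congr 1
    funext r
    exact (hgf r).symm
  have hstep2 : ((c * ∑' r : ℤ, f (b * (a * r + x)) : ℝ) : ℂ) =
      ∑' n : ℤ, (c : ℂ) * (𝓕 g ((n : ℤ) : ℝ) * (fourier n ((x / a : ℝ) : UnitAddCircle) : ℂ)) := by
    rw [Complex.ofReal_mul, hstep1, tsum_mul_left]
  have hre : c * ∑' r : ℤ, f (b * (a * r + x)) =
      ∑' n : ℤ, ((c : ℂ) * (𝓕 g ((n : ℤ) : ℝ) *
        (fourier n ((x / a : ℝ) : UnitAddCircle) : ℂ))).re := by
    have h9 := congrArg Complex.re hstep2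
    rw [Complex.ofReal_re] at h9
    rw [h9, Complex.re_tsum (hT_sum.mul_left _)]
  have hterm : ∀ n : ℤ, ((c : ℂ) * (𝓕 g ((n : ℤ) : ℝ) *
      (fourier n ((x / a : ℝ) : UnitAddCircle) : ℂ))).re =
      (∫ v : ℝ, f v * Real.cos (2 * Real.pi * (n : ℝ) / c * v)) *
        Real.cos (2 * Real.pi * n * x / a) +
      (∫ v : ℝ, f v * Real.sin (2 * Real.pi * (n : ℝ) / c * v)) *
        Real.sin (2 * Real.pi * n * x / a) := by
    intro n
    rw [← mul_assoc, key1' n, key2 n]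
    exact re_aux _ _ _
  have hu_sum : Summable fun n : ℤ =>
      (∫ v : ℝ, f v * Real.cos (2 * Real.pi * (n : ℝ) / c * v)) *
        Real.cos (2 * Real.pi * n * x / a) +
      (∫ v : ℝ, f v * Real.sin (2 * Real.pi * (n : ℝ) / c * v)) *
        Real.sin (2 * Real.pi * n * x / a) := by
    have h10 : Summable fun n : ℤ => ((c : ℂ) * (𝓕 g ((n : ℤ) : ℝ) *
        (fourier n ((x / a : ℝ) : UnitAddCircle) : ℂ))).re :=
      (Complex.hasSum_re (hT_sum.mul_left ((c : ℂ))).hasSum).summable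
    exact h10.congr hterm
  have hw_sum : Summable fun n : ℤ =>
      (∫ v : ℝ, f v * Real.cos (2 * Real.pi * (n : ℝ) / c * v)) *
        Real.sin (2 * Real.pi * n * x / a) +
      (∫ v : ℝ, f v * Real.sin (2 * Real.pi * (n : ℝ) / c * v)) *
        Real.cos (2 * Real.pi * n * x / a) := by
    apply Summable.of_norm
    apply Summable.of_nonneg_of_le (fun _ => norm_nonneg _) ?_ (hFg_sum.mul_left (2 * c))
    intro n
    rw [Real.norm_eq_abs]
    calc |(∫ v : ℝ, f v * Real.cos (2 * Real.pi * (n : ℝ) / c * v)) *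
          Real.sin (2 * Real.pi * n * x / a) +
        (∫ v : ℝ, f v * Real.sin (2 * Real.pi * (n : ℝ) / c * v)) *
          Real.cos (2 * Real.pi * n * x / a)| ≤
        |(∫ v : ℝ, f v * Real.cos (2 * Real.pi * (n : ℝ) / c * v)) *
          Real.sin (2 * Real.pi * n * x / a)| +
        |(∫ v : ℝ, f v * Real.sin (2 * Real.pi * (n : ℝ) / c * v)) *
          Real.cos (2 * Real.pi * n * x / a)| := abs_add_le _ _
    _ ≤ |∫ v : ℝ, f v * Real.cos (2 * Real.pi * (n : ℝ) / c * v)| * 1 +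
        |∫ v : ℝ, f v * Real.sin (2 * Real.pi * (n : ℝ) / c * v)| * 1 := by
      rw [abs_mul, abs_mul]
      gcongr
      · exact Real.abs_sin_le_one _
      · exact Real.abs_cos_le_one _
    _ ≤ c * ‖𝓕 g ((n : ℤ) : ℝ)‖ * 1 + c * ‖𝓕 g ((n : ℤ) : ℝ)‖ * 1 := by
      gcongr
      · exact hCb n
      · exact hSb n
    _ = 2 * c * ‖𝓕 g ((n : ℤ) : ℝ)‖ := by ring
  have hw_zero : (∑' n : ℤ,
      ((∫ v : ℝ, f v * Real.cos (2 * Real.pi * (n : ℝ) / c * v)) *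
        Real.sin (2 * Real.pi * n * x / a) +
      (∫ v : ℝ, f v * Real.sin (2 * Real.pi * (n : ℝ) / c * v)) *
        Real.cos (2 * Real.pi * n * x / a))) = 0 := by
    set w : ℤ → ℝ := fun n =>
      (∫ v : ℝ, f v * Real.cos (2 * Real.pi * (n : ℝ) / c * v)) *
        Real.sin (2 * Real.pi * n * x / a) +
      (∫ v : ℝ, f v * Real.sin (2 * Real.pi * (n : ℝ) / c * v)) *
        Real.cos (2 * Real.pi * n * x / a) with hwdef
    have hodd : ∀ n : ℤ, w (-n) = -w n := by
      intro n
      have e1 : (∫ v : ℝ, f v * Real.cos (2 * Real.pi * ((-n : ℤ) : ℝ) / c * v)) =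
          ∫ v : ℝ, f v * Real.cos (2 * Real.pi * (n : ℝ) / c * v) := by
        congr 1
        funext v
        rw [show 2 * Real.pi * ((-n : ℤ) : ℝ) / c * v =
          -(2 * Real.pi * (n : ℝ) / c * v) by push_cast; ring, Real.cos_neg]
      have e2 : (∫ v : ℝ, f v * Real.sin (2 * Real.pi * ((-n : ℤ) : ℝ) / c * v)) =
          -∫ v : ℝ, f v * Real.sin (2 * Real.pi * (n : ℝ) / c * v) := by
        rw [← MeasureTheory.integral_neg]
        congr 1
        funext v
        rw [show 2 * Real.pi * ((-n : ℤ) : ℝ) / c * v =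
          -(2 * Real.pi * (n : ℝ) / c * v) by push_cast; ring, Real.sin_neg]
        ring
      have e3 : Real.sin (2 * Real.pi * ((-n : ℤ) : ℝ) * x / a) =
          -Real.sin (2 * Real.pi * (n : ℝ) * x / a) := by
        rw [show 2 * Real.pi * ((-n : ℤ) : ℝ) * x / a =
          -(2 * Real.pi * (n : ℝ) * x / a) by push_cast; ring, Real.sin_neg]
      have e4 : Real.cos (2 * Real.pi * ((-n : ℤ) : ℝ) * x / a) =
          Real.cos (2 * Real.pi * (n : ℝ) * x / a) := by
        rw [show 2 * Real.pi * ((-n : ℤ) : ℝ) * x / a =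
          -(2 * Real.pi * (n : ℝ) * x / a) by push_cast; ring, Real.cos_neg]
      simp only [hwdef]
      rw [e1, e2, e3, e4]
      ring
    have h12 : (∑' n : ℤ, w (-n)) = ∑' n : ℤ, w n := (Equiv.neg ℤ).tsum_eq w
    have h13 : (∑' n : ℤ, w (-n)) = -∑' n : ℤ, w n := by
      calc (∑' n : ℤ, w (-n)) = ∑' n : ℤ, -w n := tsum_congr hodd
      _ = -∑' n : ℤ, w n := by exact tsum_neg
    linarith [h12.symm.trans h13]
  -- right-hand side rewriting
  have hRHS : Real.sqrt (2 * Real.pi) *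
      ∑' m : ℤ, hartley (fun y => f y) (2 * Real.pi * (m : ℝ) / c) *
        cas (2 * Real.pi * m * x / a) =
      ∑' m : ℤ, ((∫ v : ℝ, f v * Real.cos (2 * Real.pi * (m : ℝ) / c * v)) -
        ∫ v : ℝ, f v * Real.sin (2 * Real.pi * (m : ℝ) / c * v)) *
          cas (2 * Real.pi * m * x / a) := by
    rw [← tsum_mul_left]
    congr 1
    funext m
    rw [hhart m]
    field_simp
  have hsplit : ∀ m : ℤ, ((∫ v : ℝ, f v * Real.cos (2 * Real.pi * (m : ℝ) / c * v)) -
      ∫ v : ℝ, f v * Real.sin (2 * Real.pi * (m : ℝ) / c * v)) *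
        cas (2 * Real.pi * m * x / a) =
      ((∫ v : ℝ, f v * Real.cos (2 * Real.pi * (m : ℝ) / c * v)) *
        Real.cos (2 * Real.pi * m * x / a) +
      (∫ v : ℝ, f v * Real.sin (2 * Real.pi * (m : ℝ) / c * v)) *
        Real.sin (2 * Real.pi * m * x / a)) -
      ((∫ v : ℝ, f v * Real.cos (2 * Real.pi * (m : ℝ) / c * v)) *
        Real.sin (2 * Real.pi * m * x / a) +
      (∫ v : ℝ, f v * Real.sin (2 * Real.pi * (m : ℝ) / c * v)) *
        Real.cos (2 * Real.pi * m * x / a)) := by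
    intro m
    simp only [cas]
    ring
  rw [hRHS, tsum_congr hsplit, hu_sum.tsum_sub hw_sum, hw_zero, sub_zero]
  exact hre.trans (tsum_congr hterm)
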